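/- For the Witt algebra element Δ = D_1 + x_1^{p-1}D_2 + ··· + x_1^{p-1}···x_{n-2}^{p-1}D_{n-1} ∈ W_{n-1} (restricted to the case with coefficients in B_{n-1}), the subring of Δ-constants is trivial: B_{n-1}^Δ = k. -/

import Mathlib

open MvPolynomial Finset

section DeltaAux

variable {k : Type*} [Field k] {m : ℕ}
variable {B : Type*} [CommRing B] [Algebra k B]

/-- The monomial `∏ j, x j ^ a j` in `B`. -/
private def Mu (x : Fin m → B) (a : Fin m → ℕ) : B := ∏ j, x j ^ a j

private lemma Mu_add (x : Fin m → B) (a b : Fin m → ℕ) :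
    Mu x (a + b) = Mu x a * Mu x b := by
  simp [Mu, pow_add, Finset.prod_mul_distrib]

private lemma Mu_eq_zero {p : ℕ} (x : Fin m → B) (hxp : ∀ i, x i ^ p = 0)
    (a : Fin m → ℕ) (i : Fin m) (h : p ≤ a i) : Mu x a = 0 := by
  apply Finset.prod_eq_zero (Finset.mem_univ i)
  have : a i = p + (a i - p) := by omega
  rw [this, pow_add, hxp i, zero_mul]

private lemma Mu_update (x : Fin m → B) (a : Fin m → ℕ) (i : Fin m) (t : ℕ) :
    Mu x (Function.update a i t) = x i ^ t * ∏ j ∈ Finset.univ.erase i, x j ^ a j := by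
  classical
  have h : (fun j => x j ^ (Function.update a i t j))
      = Function.update (fun j => x j ^ a j) i (x i ^ t) := by
    funext j
    by_cases hj : j = i
    · subst hj; simp
    · simp [Function.update_of_ne hj]
  rw [Mu]
  calc ∏ j, x j ^ (Function.update a i t j)
      = ∏ j, Function.update (fun j => x j ^ a j) i (x i ^ t) j := by rw [h]
    _ = x i ^ t * ∏ j ∈ Finset.univ.erase i, x j ^ a j := by
        rw [Finset.prod_update_of_mem (Finset.mem_univ i), Finset.sdiff_singleton_eq_erase]

private lemma D_prod (x : Fin m → B) (Di : Derivation k B B) (i : Fin m)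
    (h0 : ∀ j, j ≠ i → Di (x j) = 0) (a : Fin m → ℕ) (s : Finset (Fin m)) (hi : i ∉ s) :
    Di (∏ j ∈ s, x j ^ a j) = 0 := by
  classical
  induction s using Finset.induction_on with
  | empty => simp
  | insert j s' hj ih =>
    rw [Finset.prod_insert hj, Derivation.leibniz]
    have hji : j ≠ i := fun h => hi (h ▸ Finset.mem_insert_self j _)
    have h1 : Di (x j ^ a j) = 0 := by
      rw [Derivation.leibniz_pow, h0 j hji, smul_zero, smul_zero]
    rw [h1, ih (fun h => hi (Finset.mem_insert_of_mem h)), smul_zero, smul_zero, add_zero]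

private lemma D_Mu (x : Fin m → B) (Di : Derivation k B B) (i : Fin m)
    (h1 : Di (x i) = 1) (h0 : ∀ j, j ≠ i → Di (x j) = 0) (a : Fin m → ℕ) :
    Di (Mu x a) = a i • Mu x (Function.update a i (a i - 1)) := by
  classical
  have hsplit : Mu x a = x i ^ a i * ∏ j ∈ Finset.univ.erase i, x j ^ a j := by
    conv_lhs => rw [show a = Function.update a i (a i) from (Function.update_eq_self i a).symm]
    exact Mu_update x a i (a i)
  rw [hsplit, Derivation.leibniz]
  have hR : Di (∏ j ∈ Finset.univ.erase i, x j ^ a j) = 0 :=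
    D_prod x Di i h0 a _ (Finset.notMem_erase i _)
  rw [hR, smul_zero, zero_add, Derivation.leibniz_pow, h1, Mu_update]
  simp only [smul_eq_mul, mul_one]
  rw [mul_smul_comm]
  congr 1
  ring

private lemma Mu_cfun (x : Fin m → B) (i : Fin m) (c : ℕ) :
    (∏ j ∈ Finset.univ.filter (fun j : Fin m => j < i), x j ^ c)
      = Mu x (fun j => if j < i then c else 0) := by
  classical
  rw [Mu, ← Finset.prod_filter_mul_prod_filter_not Finset.univ (fun j : Fin m => j < i)
      (fun j => x j ^ (if j < i then c else 0))]
  have h1 : ∏ j ∈ Finset.univ.filter (fun j : Fin m => j < i),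
      x j ^ (if j < i then c else 0) = ∏ j ∈ Finset.univ.filter (fun j : Fin m => j < i), x j ^ c :=
    Finset.prod_congr rfl fun j hj => by rw [if_pos (Finset.mem_filter.mp hj).2]
  have h2 : ∏ j ∈ Finset.univ.filter (fun j : Fin m => ¬ j < i),
      x j ^ (if j < i then c else 0) = 1 :=
    Finset.prod_eq_one fun j hj => by rw [if_neg (Finset.mem_filter.mp hj).2, pow_zero]
  rw [h1, h2, mul_one]

private lemma Delta_Mu {p : ℕ} (hp2 : 2 ≤ p) (x : Fin m → B) (hxp : ∀ i, x i ^ p = 0)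
    (D : Fin m → Derivation k B B) (hD : ∀ i j, D i (x j) = if i = j then 1 else 0)
    (Δ : Derivation k B B)
    (hΔ : Δ = ∑ i : Fin m,
      (∏ j ∈ Finset.univ.filter (fun j : Fin m => j < i), x j ^ (p - 1)) • D i)
    (a : Fin m → ℕ)
    (i₀ : Fin m) (ha1 : a i₀ ≠ 0) (ha2 : ∀ j, j < i₀ → a j = 0) :
    Δ (Mu x a)
      = a i₀ • Mu x (fun j => if j < i₀ then p - 1 else if j = i₀ then a i₀ - 1 else a j) := by
  classical
  have happ : ∀ (s : Finset (Fin m)) (Ds : Fin m → Derivation k B B) (b : B),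
      (∑ i ∈ s, Ds i) b = ∑ i ∈ s, Ds i b := by
    intro s Ds b
    induction s using Finset.cons_induction with
    | empty => simp
    | cons i s hi ih =>
      rw [Finset.sum_cons, Finset.sum_cons, ← ih]
      simp [Derivation.coe_add]
  rw [hΔ, happ]
  have hterm : ∀ i : Fin m,
      ((∏ j ∈ Finset.univ.filter (fun j : Fin m => j < i), x j ^ (p - 1)) • D i) (Mu x a)
        = a i • Mu x ((fun j => if j < i then p - 1 else 0) + Function.update a i (a i - 1)) := by
    intro i
    rw [Derivation.smul_apply, D_Mu x (D i) i (by simpa using hD i i)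
      (fun j hj => by simpa [if_neg (Ne.symm hj)] using hD i j) a]
    rw [Mu_cfun, Mu_add, smul_eq_mul, mul_smul_comm]
  rw [Finset.sum_congr rfl fun i _ => hterm i]
  rw [Finset.sum_eq_single i₀ ?_ (fun h => absurd (Finset.mem_univ i₀) h)]
  · congr 1
    congr 1
    funext j
    show (if j < i₀ then p - 1 else 0) + Function.update a i₀ (a i₀ - 1) j
        = if j < i₀ then p - 1 else if j = i₀ then a i₀ - 1 else a j
    rcases lt_trichotomy j i₀ with hj | hj | hj
    · rw [if_pos hj, if_pos hj, Function.update_of_ne (ne_of_lt hj), ha2 j hj]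
      omega
    · subst hj
      rw [if_neg (lt_irrefl j), if_neg (lt_irrefl j), if_pos rfl, Function.update_self, zero_add]
    · have h1 : ¬ j < i₀ := not_lt.mpr (le_of_lt hj)
      have h2 : j ≠ i₀ := ne_of_gt hj
      rw [if_neg h1, if_neg h1, if_neg h2, Function.update_of_ne h2, zero_add]
  · intro i _ hne
    rcases lt_or_gt_of_ne hne with hi | hi
    · rw [ha2 i hi, zero_smul]
    · have : Mu x ((fun j => if j < i then p - 1 else 0) + Function.update a i (a i - 1)) = 0 := by
        apply Mu_eq_zero x hxp _ i₀
        have h1 : i₀ < i := hi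
        have h2 : i₀ ≠ i := ne_of_lt h1
        simp only [Pi.add_apply, if_pos h1, Function.update_of_ne h2]
        omega
      rw [this, smul_zero]

private lemma coeff_ideal {p : ℕ} (g : MvPolynomial (Fin m) k)
    (hg : g ∈ Ideal.span (Set.range fun i : Fin m => (X i : MvPolynomial (Fin m) k) ^ p)) :
    ∀ d : Fin m →₀ ℕ, (∀ i, d i < p) → MvPolynomial.coeff d g = 0 := by
  classical
  induction hg using Submodule.span_induction with
  | mem g hgmem =>
    intro d hd
    obtain ⟨i, rfl⟩ := hgmem
    rw [MvPolynomial.coeff_X_pow, if_neg]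
    intro h
    have := hd i
    rw [← h, Finsupp.single_eq_same] at this
    omega
  | zero => intro d hd; simp
  | add g₁ g₂ _ _ h₁ h₂ =>
    intro d hd
    rw [MvPolynomial.coeff_add, h₁ d hd, h₂ d hd, add_zero]
  | smul r g _ ih =>
    intro d hd
    rw [smul_eq_mul, MvPolynomial.coeff_mul]
    apply Finset.sum_eq_zero
    intro pr hpr
    have hsum : pr.1 + pr.2 = d := Finset.HasAntidiagonal.mem_antidiagonal.mp hpr
    have h2 : ∀ i, pr.2 i < p := by
      intro i
      have h3 : pr.1 i + pr.2 i = d i := by rw [← Finsupp.add_apply, hsum]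
      have := hd i
      omega
    rw [ih pr.2 h2, mul_zero]

private lemma pred_inj {p : ℕ} (hp2 : 2 ≤ p) (a b : Fin m → ℕ)
    (i₀ j₀ : Fin m) (ha1 : a i₀ ≠ 0) (ha2 : ∀ j, j < i₀ → a j = 0) (hsa : ∀ i, a i < p)
    (hb1 : b j₀ ≠ 0) (hb2 : ∀ j, j < j₀ → b j = 0) (hsb : ∀ i, b i < p)
    (h : (fun j => if j < i₀ then p - 1 else if j = i₀ then a i₀ - 1 else a j)
       = (fun j => if j < j₀ then p - 1 else if j = j₀ then b j₀ - 1 else b j)) : a = b := by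
  have hij : i₀ = j₀ := by
    by_contra hne
    rcases lt_or_gt_of_ne hne with h' | h'
    · have hc : (if i₀ < i₀ then p - 1 else if i₀ = i₀ then a i₀ - 1 else a i₀)
          = (if i₀ < j₀ then p - 1 else if i₀ = j₀ then b j₀ - 1 else b i₀) := congrFun h i₀
      rw [if_neg (lt_irrefl i₀), if_pos rfl, if_pos h'] at hc
      have := hsa i₀
      omega
    · have hc : (if j₀ < i₀ then p - 1 else if j₀ = i₀ then a i₀ - 1 else a j₀)
          = (if j₀ < j₀ then p - 1 else if j₀ = j₀ then b j₀ - 1 else b j₀) := congrFun h j₀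
      rw [if_pos h', if_neg (lt_irrefl j₀), if_pos rfl] at hc
      have := hsb j₀
      omega
  subst hij
  funext j
  rcases lt_trichotomy j i₀ with hj | hj | hj
  · rw [ha2 j hj, hb2 j hj]
  · subst hj
    have hc : (if j < j then p - 1 else if j = j then a j - 1 else a j)
        = (if j < j then p - 1 else if j = j then b j - 1 else b j) := congrFun h j
    rw [if_neg (lt_irrefl j), if_neg (lt_irrefl j), if_pos rfl, if_pos rfl] at hc
    omega
  · have h1 : ¬ j < i₀ := not_lt.mpr (le_of_lt hj)
    have h2 : j ≠ i₀ := ne_of_gt hj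
    have hc := congrFun h j
    simp only [if_neg h1, if_neg h2] at hc
    exact hc

end DeltaAux

/-- For `Δ = D_1 + x_1^{p-1}D_2 + ⋯ + x_1^{p-1}⋯x_{n-2}^{p-1}D_{n-1} ∈ W_{n-1}`, the subring
of `Δ`-constants is trivial: `B_{n-1}^Δ = k`.  Here `m` plays the role of `n − 1` (so `m ≥ 2`),
`B` is the truncated polynomial ring in `m` variables, and `Δ = Σ_i (Π_{j<i} x_j^{p-1}) D_i`. -/
theorem Delta_constants_trivial
    (k : Type*) [Field k] (p m : ℕ) [Fact (Nat.Prime p)] [CharP k p] (hp : 3 < p)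
    (hm : 2 ≤ m)
    (B : Type*) [CommRing B] [Algebra k B]
    (e : (MvPolynomial (Fin m) k ⧸
        Ideal.span (Set.range fun i : Fin m => (X i : MvPolynomial (Fin m) k) ^ p)) ≃ₐ[k] B)
    (x : Fin m → B) (hx : ∀ j, x j = e (Ideal.Quotient.mk _ (X j)))
    (D : Fin m → Derivation k B B) (hD : ∀ i j, D i (x j) = if i = j then 1 else 0)
    (Δ : Derivation k B B)
    (hΔ : Δ = ∑ i : Fin m,
      (∏ j ∈ Finset.univ.filter (fun j : Fin m => j < i), x j ^ (p - 1)) • D i) :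
    ∀ f : B, Δ f = 0 ↔ ∃ c : k, f = algebraMap k B c := by
  classical
  intro f
  have hp2 : 2 ≤ p := by omega
  set F : MvPolynomial (Fin m) k →ₐ[k] B :=
    e.toAlgHom.comp (Ideal.Quotient.mkₐ k (Ideal.span (Set.range fun i : Fin m => (X i : MvPolynomial (Fin m) k) ^ p))) with hF
  have hFapp : ∀ P, F P = e (Ideal.Quotient.mk (Ideal.span (Set.range fun i : Fin m => (X i : MvPolynomial (Fin m) k) ^ p)) P) := fun P => rfl
  have hFX : ∀ j, F (X j) = x j := by
    intro j
    rw [hx j, hFapp]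
  have hxp : ∀ i, x i ^ p = 0 := by
    intro i
    rw [← hFX i, ← map_pow, hFapp]
    have hmem : (X i : MvPolynomial (Fin m) k) ^ p ∈ (Ideal.span (Set.range fun i : Fin m => (X i : MvPolynomial (Fin m) k) ^ p)) := Ideal.subset_span ⟨i, rfl⟩
    rw [Ideal.Quotient.eq_zero_iff_mem.mpr hmem, map_zero]
  have hFmon : ∀ (dd : Fin m →₀ ℕ) (c : k), F (monomial dd c) = c • Mu x ⇑dd := by
    intro dd c
    rw [monomial_eq, map_mul]
    have h1 : F (C c) = algebraMap k B c := by
      rw [show (C c : MvPolynomial (Fin m) k) = algebraMap k _ c from rfl, AlgHom.commutes]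
    have h2 : F (dd.prod fun n e => X n ^ e) = Mu x ⇑dd := by
      rw [Finsupp.prod, map_prod]
      have h3 : ∀ a ∈ dd.support, F (X a ^ dd a) = x a ^ dd a := by
        intro a _
        rw [map_pow, hFX]
      rw [Finset.prod_congr rfl h3, Mu]
      apply Finset.prod_subset (Finset.subset_univ _)
      intro i _ hi
      rw [Finsupp.notMem_support_iff.mp hi, pow_zero]
    rw [h1, h2, Algebra.smul_def]
  have hind : ∀ P : MvPolynomial (Fin m) k, (∀ dd ∈ P.support, ∀ i, dd i < p) →
      F P = 0 → P = 0 := by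
    intro P hs h0
    have hq : Ideal.Quotient.mk (Ideal.span (Set.range fun i : Fin m => (X i : MvPolynomial (Fin m) k) ^ p)) P = 0 := by
      apply e.injective
      rw [map_zero, ← hFapp]
      exact h0
    have hmem : P ∈ (Ideal.span (Set.range fun i : Fin m => (X i : MvPolynomial (Fin m) k) ^ p)) := Ideal.Quotient.eq_zero_iff_mem.mp hq
    ext dd
    rw [MvPolynomial.coeff_zero]
    by_cases hdd : dd ∈ P.support
    · exact coeff_ideal P hmem dd (hs dd hdd)
    · exact MvPolynomial.notMem_support_iff.mp hdd
  constructor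
  · intro hf0
    obtain ⟨q, hq⟩ := e.surjective f
    obtain ⟨P₀, hP₀'⟩ := Ideal.Quotient.mk_surjective q
    have hP₀ : F P₀ = f := by
      rw [hFapp, hP₀']
      exact hq
    set T : Finset (Fin m →₀ ℕ) := P₀.support.filter (fun dd => ∀ i, dd i < p) with hT
    have hTs : ∀ dd ∈ T, ∀ i, dd i < p := fun dd h => (Finset.mem_filter.mp h).2
    have hfT : f = ∑ dd ∈ T, coeff dd P₀ • Mu x ⇑dd := by
      conv_lhs => rw [← hP₀]
      conv_lhs => rw [P₀.as_sum]
      rw [map_sum, ← Finset.sum_filter_add_sum_filter_not P₀.support (fun dd => ∀ i, dd i < p)]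
      have hz : ∑ dd ∈ P₀.support.filter (fun dd => ¬ ∀ i, dd i < p),
          F (monomial dd (coeff dd P₀)) = 0 := by
        apply Finset.sum_eq_zero
        intro dd hdd
        obtain ⟨i, hi⟩ := not_forall.mp (Finset.mem_filter.mp hdd).2
        rw [hFmon, Mu_eq_zero x hxp _ i (not_lt.mp hi), smul_zero]
      rw [hz, add_zero]
      exact Finset.sum_congr rfl fun dd _ => hFmon dd _
    -- least nonzero index
    have hm0 : 0 < m := by omega
    set idx : (Fin m →₀ ℕ) → Fin m := fun dd =>
      if h : dd.support.Nonempty then dd.support.min' h else ⟨0, hm0⟩ with hidx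
    have hidxP : ∀ dd : Fin m →₀ ℕ, dd ≠ 0 →
        dd (idx dd) ≠ 0 ∧ ∀ j, j < idx dd → dd j = 0 := by
      intro dd h0
      have hne : dd.support.Nonempty := Finsupp.support_nonempty_iff.mpr h0
      have heq : idx dd = dd.support.min' hne := by rw [hidx]; exact dif_pos hne
      constructor
      · rw [heq]
        exact Finsupp.mem_support_iff.mp (dd.support.min'_mem hne)
      · intro j hj
        by_contra hjn
        have hle : idx dd ≤ j := by
          rw [heq]
          exact dd.support.min'_le j (Finsupp.mem_support_iff.mpr hjn)
        exact absurd hj (not_lt.mpr hle)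
    set pr : (Fin m →₀ ℕ) → (Fin m → ℕ) := fun dd => fun j =>
      if j < idx dd then p - 1 else if j = idx dd then dd (idx dd) - 1 else dd j with hpr
    have hcoe : ∀ g : Fin m → ℕ, ⇑(Finsupp.equivFunOnFinite.symm g) = g := fun g => rfl
    have hkey : ∀ dd ∈ T.erase 0,
        Δ (Mu x ⇑dd) = (dd (idx dd) : k) • Mu x (pr dd) := by
      intro dd hdd
      have h0 : dd ≠ 0 := (Finset.mem_erase.mp hdd).1
      obtain ⟨h1, h2⟩ := hidxP dd h0
      rw [Delta_Mu hp2 x hxp D hD Δ hΔ ⇑dd (idx dd) h1 h2, Nat.cast_smul_eq_nsmul]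
    have hzero : (0 : B)
        = ∑ dd ∈ T.erase 0, (coeff dd P₀ * (dd (idx dd) : k)) • Mu x (pr dd) := by
      calc (0 : B) = Δ f := hf0.symm
        _ = ∑ dd ∈ T, coeff dd P₀ • Δ (Mu x ⇑dd) := by
            rw [hfT, map_sum]
            exact Finset.sum_congr rfl fun dd _ => Δ.map_smul _ _
        _ = ∑ dd ∈ T.erase 0, coeff dd P₀ • Δ (Mu x ⇑dd) := by
            symm
            apply Finset.sum_erase
            have : Mu x ⇑(0 : Fin m →₀ ℕ) = 1 := by simp [Mu]
            rw [this, Δ.map_one_eq_zero, smul_zero]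
        _ = ∑ dd ∈ T.erase 0, (coeff dd P₀ * (dd (idx dd) : k)) • Mu x (pr dd) := by
            apply Finset.sum_congr rfl
            intro dd hdd
            rw [hkey dd hdd, smul_smul]
    set Q : MvPolynomial (Fin m) k := ∑ dd ∈ T.erase 0,
      monomial (Finsupp.equivFunOnFinite.symm (pr dd)) (coeff dd P₀ * (dd (idx dd) : k)) with hQ
    have hFQ : F Q = 0 := by
      rw [hQ, map_sum]
      rw [show (0 : B) = ∑ dd ∈ T.erase 0,
          (coeff dd P₀ * (dd (idx dd) : k)) • Mu x (pr dd) from hzero]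
      apply Finset.sum_congr rfl
      intro dd _
      rw [hFmon, hcoe]
    have hprs : ∀ dd ∈ T.erase 0, ∀ i, pr dd i < p := by
      intro dd hdd i
      have hsm := hTs dd (Finset.mem_erase.mp hdd).2
      rw [hpr]
      dsimp only
      split_ifs
      · omega
      · have := hsm (idx dd); omega
      · exact hsm i
    have hQs : ∀ dd ∈ Q.support, ∀ i, dd i < p := by
      intro dd hdd i
      have hsub := MvPolynomial.support_sum hdd
      obtain ⟨d', hd', hdd'⟩ := Finset.mem_biUnion.mp hsub
      have : dd = Finsupp.equivFunOnFinite.symm (pr d') := by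
        by_cases hc : (coeff d' P₀ * (d' (idx d') : k)) = 0
        · rw [hc] at hdd'
          simp at hdd'
        · rw [MvPolynomial.support_monomial, if_neg hc] at hdd'
          exact Finset.mem_singleton.mp hdd'
      rw [this]
      rw [show (Finsupp.equivFunOnFinite.symm (pr d')) i = pr d' i from rfl]
      exact hprs d' hd' i
    have hQ0 : Q = 0 := hind Q hQs hFQ
    have hcast : ∀ dd ∈ T.erase 0, ((dd (idx dd) : k)) ≠ 0 := by
      intro dd hdd h0
      have h1 := (hidxP dd (Finset.mem_erase.mp hdd).1).1
      have h2 := hTs dd (Finset.mem_erase.mp hdd).2 (idx dd)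
      have h3 : (p : ℕ) ∣ dd (idx dd) := (CharP.cast_eq_zero_iff k p _).mp h0
      have h4 : p ≤ dd (idx dd) := Nat.le_of_dvd (Nat.pos_of_ne_zero h1) h3
      omega
    have hc0 : ∀ dd ∈ T.erase 0, coeff dd P₀ = 0 := by
      intro dd hdd
      have h1 : coeff (Finsupp.equivFunOnFinite.symm (pr dd)) Q = 0 := by
        rw [hQ0, MvPolynomial.coeff_zero]
      rw [hQ, MvPolynomial.coeff_sum] at h1
      rw [Finset.sum_eq_single_of_mem dd hdd ?_] at h1
      · rw [MvPolynomial.coeff_monomial, if_pos rfl] at h1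
        have := hcast dd hdd
        exact (mul_eq_zero.mp h1).resolve_right this
      · intro d' hd' hne
        rw [MvPolynomial.coeff_monomial, if_neg]
        intro heq
        apply hne
        have hpreq : pr d' = pr dd := Finsupp.equivFunOnFinite.symm.injective heq
        have hd'0 := (Finset.mem_erase.mp hd').1
        have hdd0 := (Finset.mem_erase.mp hdd).1
        have hfun : ⇑d' = ⇑dd := by
          apply pred_inj hp2 ⇑d' ⇑dd (idx d') (idx dd)
            (hidxP d' hd'0).1 (hidxP d' hd'0).2 (hTs d' (Finset.mem_erase.mp hd').2)
            (hidxP dd hdd0).1 (hidxP dd hdd0).2 (hTs dd (Finset.mem_erase.mp hdd).2)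
          rw [hpr] at hpreq
          exact hpreq
        exact DFunLike.coe_injective hfun
    have hfc : f = coeff 0 P₀ • Mu x ⇑(0 : Fin m →₀ ℕ) := by
      rw [hfT]
      refine Finset.sum_eq_single 0 (fun dd hdd hne => ?_) (fun h0 => ?_)
      · rw [hc0 dd (Finset.mem_erase.mpr ⟨hne, hdd⟩), zero_smul]
      · have hc : coeff 0 P₀ = 0 := by
          by_contra hcc
          exact h0 (Finset.mem_filter.mpr ⟨MvPolynomial.mem_support_iff.mpr hcc,
            fun i => by simp; omega⟩)
        rw [hc, zero_smul]
    refine ⟨coeff 0 P₀, ?_⟩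
    rw [hfc, show Mu x ⇑(0 : Fin m →₀ ℕ) = 1 by simp [Mu], Algebra.algebraMap_eq_smul_one]
  · rintro ⟨c, rfl⟩
    exact Δ.map_algebraMap c
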